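/- Assume hypotheses (EC) and (UC). Let τ ∈ [0,T) and 0 ≤ M < M^τ. Then (OP)^{M,τ} has the bang-bang property: every optimal control u* satisfies ‖u*(t)‖ = M for a.e. t ∈ (τ,T); and (OP)^{M,τ} has a unique optimal control, in the sense that any two optimal controls u₁ and u₂ satisfy u₁(t) = u₂(t) for a.e. t ∈ (τ,T). -/

import Mathlib

open MeasureTheory Set Filter Topology

noncomputable section

variable {H : Type*} [NormedAddCommGroup H] [InnerProductSpace ℂ H] [CompleteSpace H]
  [SecondCountableTopology H]

/-- `U` is a strongly continuous one-parameter group of unitary operators on `H`,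
abstracting the Schrödinger group `e^{-iΔt}`. -/
def IsUnitaryGroup (U : ℝ → H →L[ℂ] H) : Prop :=
  U 0 = ContinuousLinearMap.id ℂ H ∧
  (∀ s t : ℝ, U (s + t) = (U s).comp (U t)) ∧
  (∀ (t : ℝ) (x : H), ‖U t x‖ = ‖x‖) ∧
  ∀ x : H, Continuous fun t : ℝ => U t x

/-- `B` is a nonzero orthogonal projection on `H`, abstracting multiplication by `χ_ω`. -/
def IsOrthProj (B : H →L[ℂ] H) : Prop :=
  B ≠ 0 ∧ B.comp B = B ∧ ∀ x y : H, (inner ℂ (B x) y : ℂ) = inner ℂ x (B y)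

/-- Membership in `L∞((a,b);H)`. -/
def MemLinfty (u : ℝ → H) (a b : ℝ) : Prop :=
  AEStronglyMeasurable u (volume : Measure ℝ) ∧
    ∃ c : ℝ, ∀ᵐ t : ℝ ∂volume, t ∈ Ioo a b → ‖u t‖ ≤ c

/-- Membership in `L∞((0,∞);H)`. -/
def MemLinftyInf (u : ℝ → H) : Prop :=
  AEStronglyMeasurable u (volume : Measure ℝ) ∧
    ∃ c : ℝ, ∀ᵐ t : ℝ ∂volume, t ∈ Ioi (0 : ℝ) → ‖u t‖ ≤ c

/-- The `L∞((a,b);H)` norm of `u`. -/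
def supNorm (u : ℝ → H) (a b : ℝ) : ℝ :=
  sInf {c : ℝ | 0 ≤ c ∧ ∀ᵐ t : ℝ ∂volume, t ∈ Ioo a b → ‖u t‖ ≤ c}

/-- `stateT U B T τ u y₀ = y(T; χ_{(τ,T)}u, y₀)`, the mild solution at time `T` of the
controlled Schrödinger equation with initial state `y₀`, the control acting on `(τ,T)`:
`y(T) = U(T)y₀ + ∫_τ^T U(T-s) B u(s) ds`.  The free state at time `t` starting from `y₀`
with control `u` active from time `0` is `stateT U B t 0 u y₀`. -/
def stateT (U : ℝ → H →L[ℂ] H) (B : H →L[ℂ] H) (T τ : ℝ) (u : ℝ → H) (y₀ : H) : H :=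
  U T y₀ + ∫ s in Ioo τ T, U (T - s) (B (u s))

/-- Hypothesis (EC): `L∞`-exact controllability with cost. -/
def EC (U : ℝ → H →L[ℂ] H) (B : H →L[ℂ] H) : Prop :=
  ∀ τ : ℝ, 0 < τ → ∃ C : ℝ, 0 < C ∧ ∀ y₀ z : H, ∃ u : ℝ → H,
    AEStronglyMeasurable u (volume : Measure ℝ) ∧
    (∀ᵐ t : ℝ ∂volume, t ∈ Ioo 0 τ → ‖u t‖ ≤ C * ‖z - U τ y₀‖) ∧
    stateT U B τ 0 u y₀ = z

/-- Hypothesis (UC): unique continuation. -/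
def UC (U : ℝ → H →L[ℂ] H) (B : H →L[ℂ] H) : Prop :=
  ∀ η : H, η ≠ 0 → volume {t : ℝ | B (U t η) = 0} = 0

/-- The admissible set `U_M` of the minimal time problem `(TOCP)_M`. -/
def UMset (U : ℝ → H →L[ℂ] H) (B : H →L[ℂ] H) (y₀ : H) (M : ℝ) : Set (ℝ → H) :=
  {u | MemLinftyInf u ∧ (∀ᵐ t : ℝ ∂volume, t ∈ Ioi (0 : ℝ) → ‖u t‖ ≤ M) ∧
    ∃ s : ℝ, 0 < s ∧ stateT U B s 0 u y₀ = 0}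

/-- The minimal time `T_M` of `(TOCP)_M`. -/
def Tmin (U : ℝ → H →L[ℂ] H) (B : H →L[ℂ] H) (y₀ : H) (M : ℝ) : ℝ :=
  sInf {s : ℝ | 0 < s ∧ ∃ u ∈ UMset U B y₀ M, stateT U B s 0 u y₀ = 0}

/-- The admissible set `V_T` of the minimal norm problem `(NOCP)_T`. -/
def VTset (U : ℝ → H →L[ℂ] H) (B : H →L[ℂ] H) (y₀ : H) (T : ℝ) : Set (ℝ → H) :=
  {v | MemLinfty v 0 T ∧ stateT U B T 0 v y₀ = 0}

/-- The minimal norm `M_T` of `(NOCP)_T`. -/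
def Mmin (U : ℝ → H →L[ℂ] H) (B : H →L[ℂ] H) (y₀ : H) (T : ℝ) : ℝ :=
  sInf ((fun v : ℝ → H => supNorm v 0 T) '' VTset U B y₀ T)

/-- Hypothesis (BB): bang-bang property of the minimal time problems. -/
def BB (U : ℝ → H →L[ℂ] H) (B : H →L[ℂ] H) : Prop :=
  ∀ y₀ : H, y₀ ≠ 0 → ∀ M : ℝ, 0 < M → ∀ u ∈ UMset U B y₀ M,
    stateT U B (Tmin U B y₀ M) 0 u y₀ = 0 →
    ∀ᵐ t : ℝ ∂volume, t ∈ Ioo 0 (Tmin U B y₀ M) → ‖u t‖ = M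

/-- Hypothesis (ET): existence of optimal controls for the minimal time problems. -/
def ET (U : ℝ → H →L[ℂ] H) (B : H →L[ℂ] H) : Prop :=
  ∀ y₀ : H, y₀ ≠ 0 → ∀ M : ℝ, 0 < M →
    ∃ u ∈ UMset U B y₀ M, stateT U B (Tmin U B y₀ M) 0 u y₀ = 0

/-- The admissible set `U_{M,τ}`. -/
def UadmSet (M τ T : ℝ) : Set (ℝ → H) :=
  {u | MemLinfty u 0 T ∧ ∀ᵐ t : ℝ ∂volume, t ∈ Ioo τ T → ‖u t‖ ≤ M}

/-- The optimal distance `r(M,τ)` of the optimal target problem `(OP)^{M,τ}`. -/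
def rOP (U : ℝ → H →L[ℂ] H) (B : H →L[ℂ] H) (y₀ z_d : H) (T M τ : ℝ) : ℝ :=
  sInf ((fun u : ℝ → H => ‖stateT U B T τ u y₀ - z_d‖) '' UadmSet M τ T)

/-- `u` is an optimal control to `(OP)^{M,τ}`. -/
def IsOptOP (U : ℝ → H →L[ℂ] H) (B : H →L[ℂ] H) (y₀ z_d : H) (T M τ : ℝ) (u : ℝ → H) :
    Prop :=
  u ∈ UadmSet M τ T ∧ ‖stateT U B T τ u y₀ - z_d‖ = rOP U B y₀ z_d T M τ

/-- `M^τ`, the minimal norm for exact steering to the target `z_d`. -/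
def Mtau (U : ℝ → H →L[ℂ] H) (B : H →L[ℂ] H) (y₀ z_d : H) (T τ : ℝ) : ℝ :=
  sInf ((fun u : ℝ → H => supNorm u τ T) ''
    {u : ℝ → H | MemLinfty u 0 T ∧ stateT U B T τ u y₀ = z_d})

/-- The admissible set `W_{τ,r}` of the optimal norm problem `(NP)^{τ,r}`. -/
def WadmSet (U : ℝ → H →L[ℂ] H) (B : H →L[ℂ] H) (y₀ z_d : H) (T τ r : ℝ) :
    Set (ℝ → H) :=
  {u | MemLinfty u 0 T ∧ ‖stateT U B T τ u y₀ - z_d‖ ≤ r}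

/-- The optimal norm `M(τ,r)` of `(NP)^{τ,r}`. -/
def MNP (U : ℝ → H →L[ℂ] H) (B : H →L[ℂ] H) (y₀ z_d : H) (T τ r : ℝ) : ℝ :=
  sInf ((fun u : ℝ → H => supNorm u τ T) '' WadmSet U B y₀ z_d T τ r)

/-- `u` is an optimal control to `(NP)^{τ,r}`. -/
def IsOptNP (U : ℝ → H →L[ℂ] H) (B : H →L[ℂ] H) (y₀ z_d : H) (T τ r : ℝ) (u : ℝ → H) :
    Prop :=
  u ∈ WadmSet U B y₀ z_d T τ r ∧ supNorm u τ T = MNP U B y₀ z_d T τ r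

/-- The admissible set `V_{M,r}` of the second type optimal time problem `(TP)^{M,r}`. -/
def VadmSet (U : ℝ → H →L[ℂ] H) (B : H →L[ℂ] H) (y₀ z_d : H) (T M r : ℝ) :
    Set (ℝ → H) :=
  {u | ∃ τ : ℝ, τ ∈ Ico (0 : ℝ) T ∧ u ∈ UadmSet M τ T ∧
    ‖stateT U B T τ u y₀ - z_d‖ ≤ r}

/-- `τ_{M,r}(u)`. -/
def tauOf (U : ℝ → H →L[ℂ] H) (B : H →L[ℂ] H) (y₀ z_d : H) (T r : ℝ) (u : ℝ → H) : ℝ :=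
  sSup {τ : ℝ | τ ∈ Ico (0 : ℝ) T ∧ ‖stateT U B T τ u y₀ - z_d‖ ≤ r}

/-- The optimal time `τ(M,r)` of `(TP)^{M,r}`. -/
def tauTP (U : ℝ → H →L[ℂ] H) (B : H →L[ℂ] H) (y₀ z_d : H) (T M r : ℝ) : ℝ :=
  sSup (tauOf U B y₀ z_d T r '' VadmSet U B y₀ z_d T M r)

/-- `u` is an optimal control to `(TP)^{M,r}`. -/
def IsOptTP (U : ℝ → H →L[ℂ] H) (B : H →L[ℂ] H) (y₀ z_d : H) (T M r : ℝ) (u : ℝ → H) :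
    Prop :=
  u ∈ VadmSet U B y₀ z_d T M r ∧
    ‖stateT U B T (tauTP U B y₀ z_d T M r) u y₀ - z_d‖ ≤ r

/-- The adjoint state `φ*(t) = U(t-T)(z_d - y(T; χ_{(τ,T)}u, y₀))`. -/
def adjState (U : ℝ → H →L[ℂ] H) (B : H →L[ℂ] H) (y₀ z_d : H) (T τ : ℝ) (u : ℝ → H)
    (t : ℝ) : H :=
  U (t - T) (z_d - stateT U B T τ u y₀)

open scoped InnerProductSpace in
lemma IsUnitaryGroup.inner_map' {U : ℝ → H →L[ℂ] H} (hU : IsUnitaryGroup U) (t : ℝ)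
    (x y : H) : ⟪U t x, U t y⟫_ℂ = ⟪x, y⟫_ℂ := by
  let f : H →ₗᵢ[ℂ] H := ⟨(U t).toLinearMap, fun z => hU.2.2.1 t z⟩
  exact f.inner_map_map x y

lemma IsUnitaryGroup.apply_neg' {U : ℝ → H →L[ℂ] H} (hU : IsUnitaryGroup U) (t : ℝ)
    (x : H) : U t (U (-t) x) = x := by
  have h := hU.2.1 t (-t)
  rw [add_neg_cancel, hU.1] at h
  have := congrArg (fun f : H →L[ℂ] H => f x) h
  simpa using this.symm

open scoped InnerProductSpace in
lemma IsUnitaryGroup.inner_adj' {U : ℝ → H →L[ℂ] H} (hU : IsUnitaryGroup U) (t : ℝ)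
    (x y : H) : ⟪x, U t y⟫_ℂ = ⟪U (-t) x, y⟫_ℂ := by
  conv_lhs => rw [← hU.apply_neg' t x]
  exact hU.inner_map' t (U (-t) x) y

lemma IsUnitaryGroup.continuous₂' {U : ℝ → H →L[ℂ] H} (hU : IsUnitaryGroup U) :
    Continuous fun p : ℝ × H => U p.1 p.2 := by
  rw [continuous_iff_continuousAt]
  rintro ⟨s₀, x₀⟩
  have h1 : Tendsto (fun p : ℝ × H => U p.1 (p.2 - x₀)) (𝓝 (s₀, x₀)) (𝓝 0) := by
    apply squeeze_zero_norm (a := fun p : ℝ × H => ‖p.2 - x₀‖)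
    · intro p; rw [hU.2.2.1]
    · have h : Tendsto (fun p : ℝ × H => p.2 - x₀) (𝓝 (s₀, x₀)) (𝓝 (x₀ - x₀)) :=
        (continuous_snd.sub continuous_const).tendsto _
      simpa using h.norm
  have h2 : Tendsto (fun p : ℝ × H => U p.1 x₀) (𝓝 (s₀, x₀)) (𝓝 (U s₀ x₀)) :=
    ((hU.2.2.2 x₀).tendsto s₀).comp (continuous_fst.tendsto _)
  have key : (fun p : ℝ × H => U p.1 p.2)
      = fun p : ℝ × H => U p.1 (p.2 - x₀) + U p.1 x₀ := by
    funext p; rw [← map_add, sub_add_cancel]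
  have h3 := h1.add h2
  rw [zero_add] at h3
  simpa [ContinuousAt, key] using h3

lemma aesm_integrand {U : ℝ → H →L[ℂ] H} (hU : IsUnitaryGroup U) (B : H →L[ℂ] H)
    {u : ℝ → H} (hu : AEStronglyMeasurable u (volume : Measure ℝ)) (T : ℝ) :
    AEStronglyMeasurable (fun s => U (T - s) (B (u s))) (volume : Measure ℝ) := by
  have h1 : AEStronglyMeasurable (fun s : ℝ => ((T - s : ℝ), B (u s)))
      (volume : Measure ℝ) :=
    ((continuous_const.sub continuous_id).aestronglyMeasurable).prodMk
      (B.continuous.comp_aestronglyMeasurable hu)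
  exact hU.continuous₂'.comp_aestronglyMeasurable h1

lemma integrableOn_integrand {U : ℝ → H →L[ℂ] H} (hU : IsUnitaryGroup U) (B : H →L[ℂ] H)
    {u : ℝ → H} (hu : AEStronglyMeasurable u (volume : Measure ℝ)) {a b c : ℝ}
    (hbd : ∀ᵐ t : ℝ ∂volume, t ∈ Ioo a b → ‖u t‖ ≤ c) (T : ℝ) :
    IntegrableOn (fun s => U (T - s) (B (u s))) (Ioo a b) volume := by
  refine Integrable.mono' (g := fun _ => ‖B‖ * c)
    (integrableOn_const measure_Ioo_lt_top.ne)
    ((aesm_integrand hU B hu T).restrict) ?_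
  have h1 := ae_restrict_mem (μ := (volume : Measure ℝ)) (measurableSet_Ioo (a := a) (b := b))
  have h2 := ae_restrict_of_ae (μ := (volume : Measure ℝ)) (s := Ioo a b) hbd
  filter_upwards [h1, h2] with t ht hbd'
  calc ‖U (T - t) (B (u t))‖ = ‖B (u t)‖ := hU.2.2.1 _ _
    _ ≤ ‖B‖ * ‖u t‖ := B.le_opNorm _
    _ ≤ ‖B‖ * c := mul_le_mul_of_nonneg_left (hbd' ht) (norm_nonneg B)

lemma stateT_add_smul (U : ℝ → H →L[ℂ] H) (B : H →L[ℂ] H) (T τ : ℝ) {u w : ℝ → H}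
    (y₀ : H) (c : ℝ)
    (hu : IntegrableOn (fun s => U (T - s) (B (u s))) (Ioo τ T) volume)
    (hw : IntegrableOn (fun s => U (T - s) (B (w s))) (Ioo τ T) volume) :
    stateT U B T τ (fun s => u s + c • w s) y₀
      = stateT U B T τ u y₀ + c • ∫ s in Ioo τ T, U (T - s) (B (w s)) := by
  unfold stateT
  have key : ∀ s : ℝ, U (T - s) (B (u s + c • w s))
      = U (T - s) (B (u s)) + c • U (T - s) (B (w s)) := by
    intro s
    rw [map_add, (B : H →L[ℂ] H).map_smul_of_tower, map_add,
      (U (T - s)).map_smul_of_tower]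
  simp_rw [key]
  have hw2 : Integrable (fun s => c • U (T - s) (B (w s)))
      ((volume : Measure ℝ).restrict (Ioo τ T)) := hw.smul c
  rw [integral_add hu hw2, integral_smul]
  abel

open scoped InnerProductSpace in
lemma re_inner_real_smul_right (x y : H) (r : ℝ) :
    RCLike.re (⟪x, r • y⟫_ℂ) = r * RCLike.re (⟪x, y⟫_ℂ) := by
  rw [RCLike.real_smul_eq_coe_smul (K := ℂ), inner_smul_right, RCLike.re_ofReal_mul]

open scoped InnerProductSpace in
lemma re_inner_real_smul_left (x y : H) (r : ℝ) :
    RCLike.re (⟪r • x, y⟫_ℂ) = r * RCLike.re (⟪x, y⟫_ℂ) := by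
  rw [RCLike.real_smul_eq_coe_smul (K := ℂ), inner_smul_left, RCLike.conj_ofReal,
    RCLike.re_ofReal_mul]

open scoped InnerProductSpace in
lemma re_inner_integral {U : ℝ → H →L[ℂ] H} (hU : IsUnitaryGroup U) {B : H →L[ℂ] H}
    (hB : IsOrthProj B) (η : H) {w : ℝ → H} {τ T : ℝ}
    (hw : IntegrableOn (fun s => U (T - s) (B (w s))) (Ioo τ T) volume) :
    RCLike.re (⟪η, ∫ s in Ioo τ T, U (T - s) (B (w s))⟫_ℂ)
      = ∫ s in Ioo τ T, RCLike.re (⟪B (U (s - T) η), w s⟫_ℂ) := by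
  have h2 : ∀ s : ℝ, ⟪η, U (T - s) (B (w s))⟫_ℂ = ⟪B (U (s - T) η), w s⟫_ℂ := by
    intro s
    rw [hU.inner_adj', neg_sub, ← hB.2.2]
  rw [← integral_inner hw η]
  rw [← integral_re (hw.const_inner (𝕜 := ℂ) η)]
  exact (integral_congr_ae (Eventually.of_forall fun s => by rw [h2])).symm

lemma supNorm_nonneg (u : ℝ → H) (a b : ℝ) : 0 ≤ supNorm u a b := by
  apply Real.sInf_nonneg
  rintro x ⟨hx, -⟩
  exact hx

lemma supNorm_le {u : ℝ → H} {a b M : ℝ} (hM : 0 ≤ M)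
    (h : ∀ᵐ t : ℝ ∂volume, t ∈ Ioo a b → ‖u t‖ ≤ M) : supNorm u a b ≤ M := by
  apply csInf_le ⟨0, fun x hx => hx.1⟩
  exact ⟨hM, h⟩

/-- If a control in `U_{M,τ}` steers exactly to `z_d`, then `Mtau ≤ M`. -/
lemma Mtau_le_of_exact {U : ℝ → H →L[ℂ] H} {B : H →L[ℂ] H} {y₀ z_d : H} {T τ M : ℝ}
    (hM : 0 ≤ M) {u : ℝ → H} (hmem : u ∈ UadmSet M τ T)
    (hst : stateT U B T τ u y₀ = z_d) : Mtau U B y₀ z_d T τ ≤ M := by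
  have h1 : Mtau U B y₀ z_d T τ ≤ supNorm u τ T := by
    apply csInf_le
    · exact ⟨0, by rintro x ⟨v, -, rfl⟩; exact supNorm_nonneg v τ T⟩
    · exact ⟨u, ⟨hmem.1, hst⟩, rfl⟩
  exact h1.trans (supNorm_le hM hmem.2)

lemma rOP_le {U : ℝ → H →L[ℂ] H} {B : H →L[ℂ] H} {y₀ z_d : H} {T M τ : ℝ}
    {u : ℝ → H} (hmem : u ∈ UadmSet M τ T) :
    rOP U B y₀ z_d T M τ ≤ ‖stateT U B T τ u y₀ - z_d‖ := by
  apply csInf_le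
  · exact ⟨0, by rintro x ⟨v, -, rfl⟩; exact norm_nonneg _⟩
  · exact ⟨u, hmem, rfl⟩

open scoped InnerProductSpace in
/-- The key maximum-principle formula for optimal controls of `(OP)^{M,τ}`. -/
lemma opt_formula
    {U : ℝ → H →L[ℂ] H} {B : H →L[ℂ] H} (hU : IsUnitaryGroup U) (hB : IsOrthProj B)
    (hUC : UC U B)
    {T : ℝ} {y₀ z_d : H}
    {τ M : ℝ} (hτ : τ ∈ Ico (0 : ℝ) T) (hM : 0 ≤ M) (hMlt : M < Mtau U B y₀ z_d T τ)
    (u : ℝ → H) (hopt : IsOptOP U B y₀ z_d T M τ u) :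
    ∀ᵐ s : ℝ ∂volume, s ∈ Ioo τ T →
      B (U (s - T) (z_d - stateT U B T τ u y₀)) ≠ 0 ∧
      u s = (M / ‖B (U (s - T) (z_d - stateT U B T τ u y₀))‖) •
        B (U (s - T) (z_d - stateT U B T τ u y₀)) := by
  classical
  obtain ⟨hmem, hval⟩ := hopt
  obtain ⟨⟨humeas, c, hbd0T⟩, hbdM⟩ := hmem
  set yT := stateT U B T τ u y₀ with hyT
  set η := z_d - yT with hηdef
  -- η ≠ 0
  have hη : η ≠ 0 := by
    intro h0
    have hexact : stateT U B T τ u y₀ = z_d := (sub_eq_zero.mp h0).symm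
    exact absurd (Mtau_le_of_exact hM ⟨⟨humeas, c, hbd0T⟩, hbdM⟩ hexact) (not_le.2 hMlt)
  set g : ℝ → H := fun s => B (U (s - T) η) with hgdef
  have hgcont : Continuous g :=
    B.continuous.comp ((hU.2.2.2 η).comp (continuous_id.sub continuous_const))
  -- the comparator control
  set v : ℝ → H := fun s => if g s = 0 then 0 else (M / ‖g s‖) • g s with hvdef
  have hvmeas : AEStronglyMeasurable v (volume : Measure ℝ) := by
    have hZ : MeasurableSet {s : ℝ | g s = 0} :=
      (isClosed_singleton.preimage hgcont).measurableSet
    have h1 : StronglyMeasurable fun s => (M / ‖g s‖) • g s :=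
      ((measurable_const.div hgcont.norm.measurable).stronglyMeasurable).smul
        hgcont.stronglyMeasurable
    exact (StronglyMeasurable.ite hZ stronglyMeasurable_const h1).aestronglyMeasurable
  have hvbd : ∀ s, ‖v s‖ ≤ M := by
    intro s
    by_cases h : g s = 0
    · simp [hvdef, h, hM]
    · have hg : (0 : ℝ) < ‖g s‖ := norm_pos_iff.2 h
      simp only [hvdef, if_neg h, norm_smul, Real.norm_eq_abs,
        abs_of_nonneg (div_nonneg hM hg.le)]
      rw [div_mul_cancel₀ _ hg.ne']
  -- integrability
  have Iu : IntegrableOn (fun s => U (T - s) (B (u s))) (Ioo τ T) volume :=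
    integrableOn_integrand hU B humeas hbdM T
  have Iv : IntegrableOn (fun s => U (T - s) (B (v s))) (Ioo τ T) volume :=
    integrableOn_integrand hU B hvmeas (Eventually.of_forall fun t _ => hvbd t) T
  have Iw : IntegrableOn (fun s => U (T - s) (B (v s - u s))) (Ioo τ T) volume := by
    have : (fun s => U (T - s) (B (v s - u s)))
        = fun s => U (T - s) (B (v s)) - U (T - s) (B (u s)) := by
      funext s; rw [map_sub, map_sub]
    rw [this]; exact Iv.sub Iu
  set D : H := ∫ s in Ioo τ T, U (T - s) (B (v s - u s)) with hDdef
  -- variational inequality : re ⟪yT - z_d, D⟫ ≥ 0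
  have hvar : 0 ≤ RCLike.re (⟪yT - z_d, D⟫_ℂ) := by
    have hstep : ∀ lam : ℝ, lam ∈ Set.Ioc (0 : ℝ) 1 →
        0 ≤ 2 * RCLike.re (⟪yT - z_d, D⟫_ℂ) + lam * ‖D‖ ^ 2 := by
      intro lam hlam
      have hadm : (fun s => u s + lam • (v s - u s)) ∈ UadmSet M τ T := by
        refine ⟨⟨?_, ?_⟩, ?_⟩
        · exact humeas.add (((hvmeas.sub humeas)).const_smul lam)
        · refine ⟨c + (M + c), ?_⟩
          filter_upwards [hbd0T] with t hbd ht
          have h1 : ‖u t‖ ≤ c := hbd ht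
          have h2 : ‖lam • (v t - u t)‖ ≤ M + c := by
            rw [norm_smul, Real.norm_eq_abs, abs_of_pos hlam.1]
            have : ‖v t - u t‖ ≤ M + c :=
              (norm_sub_le _ _).trans (add_le_add (hvbd t) h1)
            calc lam * ‖v t - u t‖ ≤ 1 * ‖v t - u t‖ := by
                  apply mul_le_mul_of_nonneg_right hlam.2 (norm_nonneg _)
              _ = ‖v t - u t‖ := one_mul _
              _ ≤ M + c := this
          calc ‖u t + lam • (v t - u t)‖ ≤ ‖u t‖ + ‖lam • (v t - u t)‖ :=
                norm_add_le _ _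
            _ ≤ c + (M + c) := add_le_add h1 h2
        · filter_upwards [hbdM] with t hbd ht
          have h1 : ‖u t‖ ≤ M := hbd ht
          have key : u t + lam • (v t - u t) = (1 - lam) • u t + lam • v t := by
            rw [smul_sub, sub_smul, one_smul]; abel
          rw [key]
          calc ‖(1 - lam) • u t + lam • v t‖
              ≤ ‖(1 - lam) • u t‖ + ‖lam • v t‖ := norm_add_le _ _
            _ = (1 - lam) * ‖u t‖ + lam * ‖v t‖ := by
                rw [norm_smul, norm_smul, Real.norm_eq_abs, Real.norm_eq_abs,
                  abs_of_nonneg (by linarith [hlam.2] : (0:ℝ) ≤ 1 - lam),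
                  abs_of_pos hlam.1]
            _ ≤ (1 - lam) * M + lam * M := by
                apply add_le_add
                · exact mul_le_mul_of_nonneg_left h1 (by linarith [hlam.2])
                · exact mul_le_mul_of_nonneg_left (hvbd t) hlam.1.le
            _ = M := by ring
      have hst : stateT U B T τ (fun s => u s + lam • (v s - u s)) y₀ = yT + lam • D :=
        stateT_add_smul U B T τ y₀ lam Iu Iw
      have hineq : ‖yT - z_d‖ ≤ ‖yT + lam • D - z_d‖ := by
        have h1 := rOP_le (U := U) (B := B) (y₀ := y₀) (z_d := z_d) hadm
        rw [hst] at h1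
        rw [hyT, hval]
        exact h1
      have hsq : ‖yT - z_d‖ ^ 2 ≤ ‖yT + lam • D - z_d‖ ^ 2 := by
        apply pow_le_pow_left₀ (norm_nonneg _) hineq
      have hexp : ‖yT + lam • D - z_d‖ ^ 2
          = ‖yT - z_d‖ ^ 2 + 2 * (lam * RCLike.re (⟪yT - z_d, D⟫_ℂ))
            + lam ^ 2 * ‖D‖ ^ 2 := by
        have h1 : yT + lam • D - z_d = (yT - z_d) + lam • D := by abel
        rw [h1, norm_add_sq (𝕜 := ℂ)]
        rw [re_inner_real_smul_right, norm_smul, Real.norm_eq_abs,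
          abs_of_pos hlam.1, mul_pow]
      rw [hexp] at hsq
      nlinarith [hlam.1, sq_nonneg lam]
    by_contra hcon
    push_neg at hcon
    set a := RCLike.re (⟪yT - z_d, D⟫_ℂ) with ha
    set b := ‖D‖ ^ 2 with hb
    have hbnn : 0 ≤ b := sq_nonneg _
    set lam := min 1 (-a / (b + 1)) with hlam
    have hlampos : 0 < lam :=
      lt_min one_pos (div_pos (neg_pos.2 hcon) (by linarith))
    have h1 := hstep lam ⟨hlampos, min_le_left _ _⟩
    have h2 : lam * b ≤ -a := by
      have h3 : lam ≤ -a / (b + 1) := min_le_right _ _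
      have h4 : lam * b ≤ (-a / (b + 1)) * b := mul_le_mul_of_nonneg_right h3 hbnn
      have h5 : (-a / (b + 1)) * b ≤ -a := by
        rw [div_mul_eq_mul_div, div_le_iff₀ (by linarith : (0:ℝ) < b + 1)]
        nlinarith [neg_pos.2 hcon]
      linarith
    nlinarith
  -- convert to an integral inequality
  have hDre : RCLike.re (⟪η, D⟫_ℂ)
      = ∫ s in Ioo τ T, RCLike.re (⟪g s, v s - u s⟫_ℂ) := by
    rw [hDdef]
    exact re_inner_integral hU hB η Iw
  have hint_le : (∫ s in Ioo τ T, RCLike.re (⟪g s, v s - u s⟫_ℂ)) ≤ 0 := by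
    rw [← hDre]
    have h1 : ⟪η, D⟫_ℂ = -⟪yT - z_d, D⟫_ℂ := by
      rw [hηdef, ← inner_neg_left, neg_sub]
    rw [h1, map_neg]
    linarith
  -- the nonnegative integrand
  have hIvu : Integrable (fun s => RCLike.re (⟪g s, v s - u s⟫_ℂ))
      ((volume : Measure ℝ).restrict (Ioo τ T)) := by
    have h2 : ∀ s : ℝ, ⟪η, U (T - s) (B (v s - u s))⟫_ℂ = ⟪g s, v s - u s⟫_ℂ := by
      intro s; rw [hU.inner_adj', neg_sub, ← hB.2.2]
    have h3 := (Iw.const_inner (𝕜 := ℂ) η).re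
    refine h3.congr (Eventually.of_forall fun s => by simp only [h2 s])
  have hvinner : ∀ s, RCLike.re (⟪g s, v s⟫_ℂ) = M * ‖g s‖ := by
    intro s
    by_cases h : g s = 0
    · simp [hvdef, h]
    · have hg : (0 : ℝ) < ‖g s‖ := norm_pos_iff.2 h
      simp only [hvdef, if_neg h]
      rw [re_inner_real_smul_right, inner_self_eq_norm_sq]
      field_simp
  have hnonneg : ∀ᵐ s ∂((volume : Measure ℝ).restrict (Ioo τ T)),
      0 ≤ RCLike.re (⟪g s, v s - u s⟫_ℂ) := by
    rw [ae_restrict_iff' measurableSet_Ioo]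
    filter_upwards [hbdM] with s hbd hs
    have h1 : ‖u s‖ ≤ M := hbd hs
    have h2 : RCLike.re (⟪g s, u s⟫_ℂ) ≤ M * ‖g s‖ := by
      calc RCLike.re (⟪g s, u s⟫_ℂ) ≤ ‖(⟪g s, u s⟫_ℂ)‖ := RCLike.re_le_norm _
        _ ≤ ‖g s‖ * ‖u s‖ := norm_inner_le_norm _ _
        _ ≤ ‖g s‖ * M := mul_le_mul_of_nonneg_left h1 (norm_nonneg _)
        _ = M * ‖g s‖ := mul_comm _ _
    rw [inner_sub_right, map_sub, hvinner s]
    linarith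
  have hzero : (fun s => RCLike.re (⟪g s, v s - u s⟫_ℂ))
      =ᵐ[(volume : Measure ℝ).restrict (Ioo τ T)] 0 := by
    apply (integral_eq_zero_iff_of_nonneg_ae hnonneg hIvu).mp
    exact le_antisymm hint_le (integral_nonneg_of_ae hnonneg)
  have heq0 : ∀ᵐ s : ℝ ∂volume, s ∈ Ioo τ T →
      RCLike.re (⟪g s, u s⟫_ℂ) = M * ‖g s‖ := by
    have := (ae_restrict_iff' measurableSet_Ioo).mp hzero
    filter_upwards [this] with s h hs
    have h1 := h hs
    simp only [Pi.zero_apply, inner_sub_right, map_sub, hvinner s] at h1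
    linarith
  -- unique continuation: g s ≠ 0 a.e.
  have hg0 : ∀ᵐ s : ℝ ∂volume, g s ≠ 0 := by
    have hS : (volume : Measure ℝ) {t : ℝ | B (U t η) = 0} = 0 := hUC η hη
    have hSm : MeasurableSet {t : ℝ | B (U t η) = 0} := by
      have hc : Continuous fun t : ℝ => B (U t η) := B.continuous.comp (hU.2.2.2 η)
      exact (isClosed_singleton.preimage hc).measurableSet
    have hpre : {s : ℝ | g s = 0} = (fun s : ℝ => s - T) ⁻¹' {t : ℝ | B (U t η) = 0} :=
      rfl
    have h2 : (volume : Measure ℝ) {s : ℝ | g s = 0} = 0 := by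
      rw [hpre, (measurePreserving_sub_right (volume : Measure ℝ) T).measure_preimage
        hSm.nullMeasurableSet, hS]
    rw [ae_iff]
    simpa using h2
  -- combine
  filter_upwards [heq0, hg0, hbdM] with s h1 h2 h3 hs
  have hre : RCLike.re (⟪g s, u s⟫_ℂ) = M * ‖g s‖ := h1 hs
  have hub : ‖u s‖ ≤ M := h3 hs
  have hgpos : (0 : ℝ) < ‖g s‖ := norm_pos_iff.2 h2
  have hlb : M ≤ ‖u s‖ := by
    have h4 : M * ‖g s‖ ≤ ‖g s‖ * ‖u s‖ := by
      calc M * ‖g s‖ = RCLike.re (⟪g s, u s⟫_ℂ) := hre.symm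
        _ ≤ ‖(⟪g s, u s⟫_ℂ)‖ := RCLike.re_le_norm _
        _ ≤ ‖g s‖ * ‖u s‖ := norm_inner_le_norm _ _
    nlinarith
  have hnu : ‖u s‖ = M := le_antisymm hub hlb
  have hkey : ‖(‖g s‖ : ℝ) • u s - M • g s‖ ^ 2 = 0 := by
    have h5 : RCLike.re (⟪(‖g s‖ : ℝ) • u s, M • g s⟫_ℂ)
        = ‖g s‖ * (M * (M * ‖g s‖)) := by
      rw [re_inner_real_smul_left, re_inner_real_smul_right, inner_re_symm, hre]
    rw [norm_sub_sq (𝕜 := ℂ), h5, norm_smul, norm_smul, Real.norm_eq_abs,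
      Real.norm_eq_abs, abs_of_nonneg (norm_nonneg (g s)), abs_of_nonneg hM, hnu]
    ring
  have h6 : (‖g s‖ : ℝ) • u s = M • g s := by
    have h7 : ‖(‖g s‖ : ℝ) • u s - M • g s‖ = 0 :=
      pow_eq_zero_iff (two_ne_zero) |>.mp hkey
    rw [norm_eq_zero, sub_eq_zero] at h7
    exact h7
  have h8 : u s = (M / ‖g s‖) • g s := by
    have h9 := congrArg (fun x : H => (‖g s‖ : ℝ)⁻¹ • x) h6
    simp only [inv_smul_smul₀ hgpos.ne', smul_smul] at h9
    rw [h9, div_eq_inv_mul]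
  exact ⟨h2, h8⟩

theorem op_bang_bang_and_uniqueness
    (U : ℝ → H →L[ℂ] H) (B : H →L[ℂ] H) (hU : IsUnitaryGroup U) (hB : IsOrthProj B)
    (hEC : EC U B) (hECrev : EC (fun t => U (-t)) B)
    (hUC : UC U B)
    (T : ℝ) (hT : 0 < T) (y₀ z_d : H) (hrT : 0 < ‖U T y₀ - z_d‖)
    (τ M : ℝ) (hτ : τ ∈ Ico (0 : ℝ) T) (hM : 0 ≤ M) (hMlt : M < Mtau U B y₀ z_d T τ) :
    (∀ u : ℝ → H, IsOptOP U B y₀ z_d T M τ u →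
      ∀ᵐ t : ℝ ∂volume, t ∈ Ioo τ T → ‖u t‖ = M) ∧
    (∀ u₁ u₂ : ℝ → H, IsOptOP U B y₀ z_d T M τ u₁ → IsOptOP U B y₀ z_d T M τ u₂ →
      ∀ᵐ t : ℝ ∂volume, t ∈ Ioo τ T → u₁ t = u₂ t) := by
  constructor
  · intro u hopt
    filter_upwards [opt_formula hU hB hUC hτ hM hMlt u hopt] with s h hs
    obtain ⟨hg, hu⟩ := h hs
    rw [hu, norm_smul, Real.norm_eq_abs,
      abs_of_nonneg (div_nonneg hM (norm_nonneg _)),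
      div_mul_cancel₀ _ (norm_ne_zero_iff.2 hg)]
  · intro u₁ u₂ h1 h2
    have hstate : stateT U B T τ u₁ y₀ = stateT U B T τ u₂ y₀ := by
      obtain ⟨⟨⟨hm1, c₁, hb1⟩, hM1⟩, hv1⟩ := h1
      obtain ⟨⟨⟨hm2, c₂, hb2⟩, hM2⟩, hv2⟩ := h2
      set y₁ := stateT U B T τ u₁ y₀ with hy₁
      set y₂ := stateT U B T τ u₂ y₀ with hy₂
      set r := rOP U B y₀ z_d T M τ with hr
      have I₁ : IntegrableOn (fun s => U (T - s) (B (u₁ s))) (Ioo τ T) volume :=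
        integrableOn_integrand hU B hm1 hM1 T
      have I₂ : IntegrableOn (fun s => U (T - s) (B (u₂ s))) (Ioo τ T) volume :=
        integrableOn_integrand hU B hm2 hM2 T
      have Iw : IntegrableOn (fun s => U (T - s) (B (u₂ s - u₁ s))) (Ioo τ T) volume := by
        have hw : (fun s => U (T - s) (B (u₂ s - u₁ s)))
            = fun s => U (T - s) (B (u₂ s)) - U (T - s) (B (u₁ s)) := by
          funext s; rw [map_sub, map_sub]
        rw [hw]; exact I₂.sub I₁
      set m : ℝ → H := fun s => u₁ s + (1/2 : ℝ) • (u₂ s - u₁ s) with hmdef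
      have hmid : ∀ s, m s = (1/2 : ℝ) • u₁ s + (1/2 : ℝ) • u₂ s := by
        intro s
        simp only [hmdef]
        module
      have hadm : m ∈ UadmSet M τ T := by
        refine ⟨⟨hm1.add ((hm2.sub hm1).const_smul _), ?_⟩, ?_⟩
        · refine ⟨(1/2) * c₁ + (1/2) * c₂, ?_⟩
          filter_upwards [hb1, hb2] with t ht1 ht2 ht
          rw [hmid t]
          calc ‖(1/2 : ℝ) • u₁ t + (1/2 : ℝ) • u₂ t‖
              ≤ ‖(1/2 : ℝ) • u₁ t‖ + ‖(1/2 : ℝ) • u₂ t‖ := norm_add_le _ _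
            _ = (1/2) * ‖u₁ t‖ + (1/2) * ‖u₂ t‖ := by
                rw [norm_smul, norm_smul]; norm_num
            _ ≤ (1/2) * c₁ + (1/2) * c₂ := by
                have := ht1 ht; have := ht2 ht
                gcongr <;> assumption
        · filter_upwards [hM1, hM2] with t ht1 ht2 ht
          rw [hmid t]
          calc ‖(1/2 : ℝ) • u₁ t + (1/2 : ℝ) • u₂ t‖
              ≤ ‖(1/2 : ℝ) • u₁ t‖ + ‖(1/2 : ℝ) • u₂ t‖ := norm_add_le _ _
            _ = (1/2) * ‖u₁ t‖ + (1/2) * ‖u₂ t‖ := by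
                rw [norm_smul, norm_smul]; norm_num
            _ ≤ (1/2) * M + (1/2) * M := by
                have := ht1 ht; have := ht2 ht
                gcongr <;> assumption
            _ = M := by ring
      have hstm : stateT U B T τ m y₀
          = y₁ + (1/2 : ℝ) • ∫ s in Ioo τ T, U (T - s) (B (u₂ s - u₁ s)) :=
        stateT_add_smul U B T τ y₀ (1/2) I₁ Iw
      have hsum : stateT U B T τ m y₀ - z_d
          = (1/2 : ℝ) • ((y₁ - z_d) + (y₂ - z_d)) := by
        rw [hstm]
        have hw : (fun s => U (T - s) (B (u₂ s - u₁ s)))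
            = fun s => U (T - s) (B (u₂ s)) - U (T - s) (B (u₁ s)) := by
          funext s; rw [map_sub, map_sub]
        rw [hw, integral_sub I₂ I₁]
        have e1 : y₁ = U T y₀ + ∫ s in Ioo τ T, U (T - s) (B (u₁ s)) := rfl
        have e2 : y₂ = U T y₀ + ∫ s in Ioo τ T, U (T - s) (B (u₂ s)) := rfl
        rw [e1, e2]
        module
      have hle : r ≤ ‖stateT U B T τ m y₀ - z_d‖ := rOP_le hadm
      rw [hsum, norm_smul, Real.norm_eq_abs] at hle
      have habs : |(1/2 : ℝ)| = 1/2 := by norm_num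
      rw [habs] at hle
      have hpar := parallelogram_law_with_norm ℂ (y₁ - z_d) (y₂ - z_d)
      have hsub : ‖(y₁ - z_d) - (y₂ - z_d)‖ = 0 := by
        nlinarith [norm_nonneg ((y₁ - z_d) - (y₂ - z_d)),
          norm_nonneg ((y₁ - z_d) + (y₂ - z_d)),
          hv1.trans hr.symm, hv2.trans hr.symm,
          norm_nonneg (y₁ - z_d)]
      have : (y₁ - z_d) - (y₂ - z_d) = 0 := norm_eq_zero.mp hsub
      have : y₁ - y₂ = 0 := by rw [← this]; abel
      exact sub_eq_zero.mp this
    filter_upwards [opt_formula hU hB hUC hτ hM hMlt u₁ h1,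
      opt_formula hU hB hUC hτ hM hMlt u₂ h2] with s ha hb hs
    obtain ⟨-, e1⟩ := ha hs
    obtain ⟨-, e2⟩ := hb hs
    rw [e1, e2, hstate]
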